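/- For integers 3 ≤ m ≤ n, the double cycle graph G_{m,n} satisfies ζ_{G_{m,n}}(u)^{-1} = −3u^{2(m+n)} + 2u^{m+2n} + 2u^{2m+n} + u^{2n} + u^{2m} − 2u^n − 2u^m + 1 in ℤ[u]. -/

import Mathlib

open Polynomial Matrix

/-- The reciprocal of the Ihara zeta function of a finite simple graph `G`, as a polynomial
in `ℤ[u]`: `(1 - u²)^(r-1) * det(I - A·u + Q·u²)`, where `A` is the adjacency matrix,
`Q = D - I` with `D` the degree matrix, and `r - 1 = |E| - |V|`. -/
noncomputable def iharaZetaInv {V : Type} [Fintype V] [DecidableEq V]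
    (G : SimpleGraph V) [DecidableRel G.Adj] : Polynomial ℤ :=
  (1 - X ^ 2) ^ (G.edgeFinset.card - Fintype.card V) *
    ((1 : Matrix V V (Polynomial ℤ)) - (X : Polynomial ℤ) • G.adjMatrix (Polynomial ℤ) +
      (X ^ 2 : Polynomial ℤ) • Matrix.diagonal (fun v => (G.degree v : Polynomial ℤ) - 1)).det

/-- The double cycle graph `G_{m,n}`: two cycles `C_m` and `C_n` glued at a single common
vertex.  Here the common vertex is `0`, the `m`-cycle is `0, 1, …, m-1, 0` and the `n`-cycle is
`0, m, m+1, …, m+n-2, 0`, on vertex set `Fin (m + n - 1)`. -/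
def doubleCycleGraph (m n : ℕ) : SimpleGraph (Fin (m + n - 1)) :=
  SimpleGraph.fromRel (fun a b =>
    (b.val = a.val + 1 ∧ b.val ≤ m - 1) ∨
    (a.val = m - 1 ∧ b.val = 0) ∨
    (b.val = a.val + 1 ∧ m ≤ a.val) ∨
    (a.val = 0 ∧ b.val = m) ∨
    (a.val = m + n - 2 ∧ b.val = 0))

noncomputable instance (m n : ℕ) : DecidableRel (doubleCycleGraph m n).Adj :=
  Classical.decRel _

set_option maxHeartbeats 2000000
set_option synthInstance.maxHeartbeats 400000

noncomputable section DC

abbrev K : Type := FractionRing (Polynomial ℤ)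

def xx : K := algebraMap (Polynomial ℤ) K X

lemma phi_inj : Function.Injective (algebraMap (Polynomial ℤ) K) :=
  IsFractionRing.injective _ _

lemma one_sub_xx_pow_ne (j : ℕ) (hj : 1 ≤ j) : (1 : K) - xx ^ j ≠ 0 := by
  intro h
  have : algebraMap (Polynomial ℤ) K (1 - X ^ j) = algebraMap (Polynomial ℤ) K 0 := by
    simpa [map_sub, map_pow, _root_.map_one, xx] using h
  have h2 : (1 - X ^ j : Polynomial ℤ) = 0 := phi_inj this
  have := congrArg (Polynomial.eval 0) h2
  simp [Polynomial.eval_pow, zero_pow (by omega : j ≠ 0)] at this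

lemma one_add_xx_pow_ne (j : ℕ) (hj : 1 ≤ j) : (1 : K) + xx ^ j ≠ 0 := by
  intro h
  have : algebraMap (Polynomial ℤ) K (1 + X ^ j) = algebraMap (Polynomial ℤ) K 0 := by
    simpa [map_add, map_pow, _root_.map_one, xx] using h
  have h2 : (1 + X ^ j : Polynomial ℤ) = 0 := phi_inj this
  have := congrArg (Polynomial.eval 0) h2
  simp [Polynomial.eval_pow, zero_pow (by omega : j ≠ 0)] at this

/-- `p k = 1 + x² + ⋯ + x^{2k}`. -/
def pp (k : ℕ) : K := ∑ i ∈ Finset.range (k + 1), xx ^ (2 * i)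

lemma pp_succ (k : ℕ) : pp (k + 1) = pp k + xx ^ (2 * (k + 1)) := by
  simp [pp, Finset.sum_range_succ]

lemma pp_zero : pp 0 = 1 := by simp [pp]

lemma pp_one : pp 1 = 1 + xx ^ 2 := by simp [pp, Finset.sum_range_succ]

lemma pp_mul_eq (k : ℕ) : pp k * (xx ^ 2 - 1) = xx ^ (2 * (k + 1)) - 1 := by
  have := geom_sum_mul (xx ^ 2) (k + 1)
  simpa [pp, ← pow_mul, mul_comm] using this

lemma pp_ne (k : ℕ) : pp k ≠ 0 := by
  intro h
  have h2 := pp_mul_eq k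
  rw [h, zero_mul] at h2
  have : (1 : K) - xx ^ (2 * (k + 1)) = 0 := by linear_combination h2
  exact one_sub_xx_pow_ne (2 * (k + 1)) (by omega) this


/-- The tridiagonal path matrix. -/
def TT (k : ℕ) : Matrix (Fin k) (Fin k) K :=
  Matrix.of fun i j =>
    if (i : ℕ) = (j : ℕ) then 1 + xx ^ 2
    else if (i : ℕ) + 1 = (j : ℕ) ∨ (j : ℕ) + 1 = (i : ℕ) then -xx else 0

lemma TT_row_sum (k : ℕ) (i : Fin k) (v : Fin k → K) :
    ∑ j, TT k i j * v j =
      (1 + xx ^ 2) * v i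
        - xx * (if h : (i : ℕ) + 1 < k then v ⟨(i : ℕ) + 1, h⟩ else 0)
        - xx * (if h : 1 ≤ (i : ℕ) then v ⟨(i : ℕ) - 1, by omega⟩ else 0) := by
  have hsplit : ∀ j : Fin k, TT k i j * v j =
      (if j = i then (1 + xx ^ 2) * v j else 0)
        + (if (i : ℕ) + 1 = (j : ℕ) then -xx * v j else 0)
        + (if (j : ℕ) + 1 = (i : ℕ) then -xx * v j else 0) := by
    intro j
    simp only [TT, Matrix.of_apply]
    by_cases h1 : (i : ℕ) = (j : ℕ)
    · have h1' : j = i := Fin.ext h1.symm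
      rw [if_pos h1, if_pos h1', if_neg (by omega), if_neg (by omega)]
      ring
    · have hji : ¬ j = i := fun h => h1 (by rw [h])
      rw [if_neg h1, if_neg hji]
      by_cases h2 : (i : ℕ) + 1 = (j : ℕ)
      · rw [if_pos (Or.inl h2), if_pos h2, if_neg (by omega)]
        ring
      · by_cases h3 : (j : ℕ) + 1 = (i : ℕ)
        · rw [if_pos (Or.inr h3), if_neg h2, if_pos h3]
          ring
        · rw [if_neg (by tauto), if_neg h2, if_neg h3]
          ring
  rw [Finset.sum_congr rfl (fun j _ => hsplit j)]
  rw [Finset.sum_add_distrib, Finset.sum_add_distrib]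
  congr 1
  · congr 1
    · simpa using Finset.sum_ite_eq' Finset.univ i (fun j => (1 + xx ^ 2) * v j)
    · by_cases h : (i : ℕ) + 1 < k
      · rw [dif_pos h]
        have : ∀ j : Fin k, ((i : ℕ) + 1 = (j : ℕ)) ↔ j = ⟨(i:ℕ)+1, h⟩ := by
          intro j; rw [Fin.ext_iff]; simp; omega
        rw [Finset.sum_congr rfl (fun j _ => by rw [if_congr (this j) rfl rfl])]
        rw [Finset.sum_ite_eq' Finset.univ]
        simp [mul_comm]
      · rw [dif_neg h, mul_zero, neg_zero]
        apply Finset.sum_eq_zero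
        intro j _
        rw [if_neg]
        have := j.isLt; omega
  · by_cases h : 1 ≤ (i : ℕ)
    · rw [dif_pos h]
      have : ∀ j : Fin k, ((j : ℕ) + 1 = (i : ℕ)) ↔ j = ⟨(i:ℕ)-1, by omega⟩ := by
        intro j; rw [Fin.ext_iff]; simp; omega
      rw [Finset.sum_congr rfl (fun j _ => by rw [if_congr (this j) rfl rfl])]
      rw [Finset.sum_ite_eq' Finset.univ]
      simp [mul_comm]
    · rw [dif_neg h, mul_zero, neg_zero]
      apply Finset.sum_eq_zero
      intro j _
      rw [if_neg]
      omega


/-- solution of `TT k ⬝ z = -x • e_{k-1}`. -/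
def zf (k j : ℕ) : K := -xx * (xx ^ (k - 1 - j) * pp j) / pp k

lemma TT_zf (k : ℕ) (hk : 1 ≤ k) (i : Fin k) :
    ∑ j, TT k i j * zf k (j : ℕ) = if (i : ℕ) + 1 = k then -xx else 0 := by
  rw [TT_row_sum]
  by_cases hl : (i : ℕ) + 1 = k
  · rw [if_pos hl, dif_neg (by omega)]
    by_cases h1 : k = 1
    · subst h1
      have h0 : (i : ℕ) = 0 := by omega
      rw [dif_neg (by omega), h0]
      simp only [zf, pp_zero, pp_one]
      have := pp_ne 1
      rw [pp_one] at this
      field_simp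
      ring
    · obtain ⟨j, rfl⟩ : ∃ j, k = j + 2 := ⟨k - 2, by omega⟩
      rw [dif_pos (by omega)]
      have hi : (i : ℕ) = j + 1 := by omega
      simp only [hi, zf]
      rw [show j + 2 - 1 - (j + 1) = 0 from by omega,
          show j + 2 - 1 - (j + 1 - 1) = 1 from by omega]
      rw [show j + 1 - 1 = j from by omega]
      have h2 := pp_ne (j + 2)
      field_simp
      rw [pp_succ (j+1), pp_succ j]
      ring
  · rw [if_neg hl, dif_pos (by omega : (i : ℕ) + 1 < k)]
    by_cases h0 : (i : ℕ) = 0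
    · rw [dif_neg (by omega)]
      obtain ⟨j, rfl⟩ : ∃ j, k = j + 2 := ⟨k - 2, by omega⟩
      simp only [h0, zf, pp_zero]
      rw [show j + 2 - 1 - 0 = j + 1 from by omega,
          show j + 2 - 1 - (0 + 1) = j from by omega]
      have h2 := pp_ne (j + 2)
      field_simp
      rw [pp_one]
      ring
    · -- interior: 1 ≤ i, i + 1 < k
      obtain ⟨l, hi⟩ : ∃ l, (i : ℕ) = l + 1 := ⟨(i : ℕ) - 1, by omega⟩
      obtain ⟨t, hk2⟩ : ∃ t, k = (i : ℕ) + t + 2 := ⟨k - (i : ℕ) - 2, by omega⟩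
      rw [dif_pos (by omega)]
      simp only [zf, hi, hk2]
      rw [show l + 1 + t + 2 - 1 - (l + 1) = t + 1 from by omega,
          show l + 1 + t + 2 - 1 - (l + 1 + 1) = t from by omega,
          show l + 1 + t + 2 - 1 - (l + 1 - 1) = t + 2 from by omega,
          show l + 1 - 1 = l from by omega]
      have h2 := pp_ne (l + 1 + t + 2)
      field_simp
      rw [pp_succ (l + 1), pp_succ l]
      ring

lemma sum_ite_last (k : ℕ) (hk : 1 ≤ k) (f : Fin k → K) :
    ∑ j : Fin k, (if (j : ℕ) + 1 = k then f j else 0) = f ⟨k - 1, by omega⟩ := by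
  have : ∀ j : Fin k, ((j : ℕ) + 1 = k) ↔ j = ⟨k - 1, by omega⟩ := by
    intro j; rw [Fin.ext_iff]; simp; omega
  rw [Finset.sum_congr rfl (fun j _ => by rw [if_congr (this j) rfl rfl])]
  simpa using Finset.sum_ite_eq' Finset.univ _ f

lemma TT_det : ∀ k, (TT k).det = pp k := by
  intro k
  induction k with
  | zero => rw [Matrix.det_fin_zero, pp_zero]
  | succ k ih =>
    rcases Nat.eq_zero_or_pos k with hk | hk
    · subst hk
      rw [Matrix.det_fin_one, pp_one]
      simp [TT]
    · -- block decomposition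
      have hdet := Matrix.det_submatrix_equiv_self (finSumFinEquiv (m := k) (n := 1)) (TT (k + 1))
      have hsub : (TT (k + 1)).submatrix (finSumFinEquiv (m := k) (n := 1)) (finSumFinEquiv (m := k) (n := 1)) =
          Matrix.fromBlocks (TT k)
            (Matrix.of fun (i : Fin k) (_ : Fin 1) => if (i : ℕ) + 1 = k then -xx else 0)
            (Matrix.of fun (_ : Fin 1) (j : Fin k) => if (j : ℕ) + 1 = k then -xx else 0)
            (Matrix.of fun _ _ => 1 + xx ^ 2) := by
        ext s t
        rcases s with i | i <;> rcases t with j | j <;>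
          (simp only [Matrix.submatrix_apply, finSumFinEquiv_apply_left,
            finSumFinEquiv_apply_right, Matrix.fromBlocks, Sum.elim_inl, Sum.elim_inr,
            Matrix.of_apply, TT, Fin.coe_castAdd, Fin.coe_natAdd];
           try (have h1 := i.isLt; have h2 := j.isLt; split_ifs <;> first | rfl | omega))
      haveI : Invertible (TT k) := by
        apply Matrix.invertibleOfIsUnitDet
        rw [ih]
        exact (isUnit_iff_ne_zero).2 (pp_ne k)
      rw [← hdet, hsub, Matrix.det_fromBlocks₁₁, ih]
      have hZ : TT k * (Matrix.of fun (i : Fin k) (_ : Fin 1) => zf k (i : ℕ)) =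
          Matrix.of fun (i : Fin k) (_ : Fin 1) => if (i : ℕ) + 1 = k then -xx else 0 := by
        ext i t
        rw [Matrix.mul_apply]
        simpa using TT_zf k hk i
      have hinv : (⅟ (TT k)) * (Matrix.of fun (i : Fin k) (_ : Fin 1) =>
          if (i : ℕ) + 1 = k then -xx else 0) =
          Matrix.of fun (i : Fin k) (_ : Fin 1) => zf k (i : ℕ) := by
        rw [← hZ, ← Matrix.mul_assoc, invOf_mul_self, Matrix.one_mul]
      rw [Matrix.mul_assoc, hinv]
      rw [Matrix.det_fin_one]
      simp only [Matrix.sub_apply, Matrix.of_apply, Matrix.mul_apply]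
      rw [show ∑ j : Fin k, (if (j : ℕ) + 1 = k then -xx else 0) * zf k (j : ℕ) =
          ∑ j : Fin k, (if (j : ℕ) + 1 = k then -xx * zf k (j : ℕ) else 0) from
          Finset.sum_congr rfl (fun j _ => by split_ifs <;> simp),
        sum_ite_last k hk]
      simp only [zf]
      rw [show k - 1 - (k - 1) = 0 from by omega]
      obtain ⟨j, rfl⟩ : ∃ j, k = j + 1 := ⟨k - 1, by omega⟩
      rw [show j + 1 - 1 = j from rfl]
      have h1 := pp_ne (j + 1)
      field_simp
      rw [pp_succ (j + 1), pp_succ j]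
      ring

def yf (k j : ℕ) : K := xx ^ j + xx ^ (k - 1 - j)

lemma TT_yf (k : ℕ) (hk : 2 ≤ k) (i : Fin k) :
    ∑ j, TT k i j * yf k (j : ℕ) =
      if (i : ℕ) = 0 ∨ (i : ℕ) + 1 = k then 1 + xx ^ (k + 1) else 0 := by
  rw [TT_row_sum]
  obtain ⟨t, rfl⟩ : ∃ t, k = t + 2 := ⟨k - 2, by omega⟩
  by_cases h0 : (i : ℕ) = 0
  · rw [if_pos (Or.inl h0), dif_pos (by omega), dif_neg (by omega)]
    simp only [yf, h0]
    rw [show t + 2 - 1 - 0 = t + 1 from by omega, show t + 2 - 1 - (0 + 1) = t from by omega]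
    ring
  · by_cases hl : (i : ℕ) + 1 = t + 2
    · rw [if_pos (Or.inr hl), dif_neg (by omega), dif_pos (by omega)]
      simp only [yf]
      rw [show (i : ℕ) = t + 1 from by omega]
      rw [show t + 2 - 1 - (t + 1) = 0 from by omega,
        show t + 1 - 1 = t from by omega, show t + 2 - 1 - t = 1 from by omega]
      ring
    · rw [if_neg (by omega), dif_pos (by omega), dif_pos (by omega)]
      obtain ⟨l, hl2⟩ : ∃ l, (i : ℕ) = l + 1 := ⟨(i : ℕ) - 1, by omega⟩
      obtain ⟨r, hr⟩ : ∃ r, t = l + r + 1 := ⟨t - l - 1, by omega⟩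
      simp only [yf, hl2, hr]
      rw [show l + r + 1 + 2 - 1 - (l + 1) = r + 1 from by omega,
        show l + r + 1 + 2 - 1 - (l + 1 + 1) = r from by omega,
        show l + 1 - 1 = l from by omega,
        show l + r + 1 + 2 - 1 - l = r + 2 from by omega]
      ring

/-- the coupling vector -/
def wv (m n : ℕ) : (Fin (m - 1) ⊕ Fin (n - 1)) → K :=
  Sum.elim (fun i => if (i : ℕ) = 0 ∨ (i : ℕ) + 1 = m - 1 then -xx else 0)
    (fun i => if (i : ℕ) = 0 ∨ (i : ℕ) + 1 = n - 1 then -xx else 0)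

def BigM (m n : ℕ) :
    Matrix ((Fin (m - 1) ⊕ Fin (n - 1)) ⊕ Fin 1) ((Fin (m - 1) ⊕ Fin (n - 1)) ⊕ Fin 1) K :=
  Matrix.fromBlocks (Matrix.fromBlocks (TT (m - 1)) 0 0 (TT (n - 1)))
    (Matrix.of fun s _ => wv m n s) (Matrix.of fun _ s => wv m n s)
    (Matrix.of fun _ _ => 1 + 3 * xx ^ 2)

lemma sum_ite_two (k : ℕ) (hk : 2 ≤ k) (f : Fin k → K) :
    ∑ i : Fin k, (if (i : ℕ) = 0 ∨ (i : ℕ) + 1 = k then f i else 0) =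
      f ⟨0, by omega⟩ + f ⟨k - 1, by omega⟩ := by
  have key : ∀ i : Fin k, (if (i : ℕ) = 0 ∨ (i : ℕ) + 1 = k then f i else 0) =
      (if i = ⟨0, by omega⟩ then f i else 0) + (if i = ⟨k - 1, by omega⟩ then f i else 0) := by
    intro i
    by_cases h0 : (i : ℕ) = 0
    · rw [if_pos (Or.inl h0), if_pos (Fin.ext h0), if_neg (by rw [Fin.ext_iff]; simp; omega)]
      ring
    · by_cases hl : (i : ℕ) + 1 = k
      · rw [if_pos (Or.inr hl), if_neg (by rw [Fin.ext_iff]; simp; omega),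
          if_pos (by rw [Fin.ext_iff]; simp; omega)]
        ring
      · rw [if_neg (by tauto), if_neg (by rw [Fin.ext_iff]; simp; omega),
          if_neg (by rw [Fin.ext_iff]; simp; omega)]
        ring
  rw [Finset.sum_congr rfl (fun i _ => key i), Finset.sum_add_distrib]
  congr 1 <;> simp [Finset.sum_ite_eq' Finset.univ]

lemma BigM_det (m n : ℕ) (hm : 3 ≤ m) (hn : 3 ≤ n) :
    (BigM m n).det = pp (m - 1) * pp (n - 1) *
      ((1 + 3 * xx ^ 2) - 2 * xx ^ 2 * (1 + xx ^ (m - 2)) / (1 + xx ^ m)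
        - 2 * xx ^ 2 * (1 + xx ^ (n - 2)) / (1 + xx ^ n)) := by
  have hxm : (1 : K) + xx ^ m ≠ 0 := one_add_xx_pow_ne m (by omega)
  have hxn : (1 : K) + xx ^ n ≠ 0 := one_add_xx_pow_ne n (by omega)
  set A := Matrix.fromBlocks (TT (m - 1)) (0 : Matrix (Fin (m-1)) (Fin (n-1)) K)
      (0 : Matrix (Fin (n-1)) (Fin (m-1)) K) (TT (n - 1)) with hA
  have hdetA : A.det = pp (m - 1) * pp (n - 1) := by
    rw [hA, Matrix.det_fromBlocks_zero₂₁, TT_det, TT_det]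
  haveI : Invertible A := Matrix.invertibleOfIsUnitDet _ (by
    rw [hdetA]; exact isUnit_iff_ne_zero.2 (mul_ne_zero (pp_ne _) (pp_ne _)))
  -- the solution vector
  set zz : (Fin (m - 1) ⊕ Fin (n - 1)) → K :=
    Sum.elim (fun i => -xx / (1 + xx ^ m) * yf (m - 1) (i : ℕ))
      (fun i => -xx / (1 + xx ^ n) * yf (n - 1) (i : ℕ)) with hzz
  set Z : Matrix (Fin (m - 1) ⊕ Fin (n - 1)) (Fin 1) K := Matrix.of fun s _ => zz s with hZdef
  have hAZ : A * Z = Matrix.of fun s _ => wv m n s := by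
    ext s t
    rw [Matrix.mul_apply, Fintype.sum_sum_type]
    rcases s with i | i
    · simp only [hA, hZdef, hzz, Matrix.fromBlocks_apply₁₁, Matrix.fromBlocks_apply₁₂,
        Matrix.of_apply, Sum.elim_inl, Sum.elim_inr, Matrix.zero_apply, zero_mul,
        Finset.sum_const_zero, add_zero]
      rw [show ∑ j : Fin (m-1), TT (m-1) i j * (-xx / (1 + xx ^ m) * yf (m-1) (j : ℕ)) =
          -xx / (1 + xx ^ m) * ∑ j : Fin (m-1), TT (m-1) i j * yf (m-1) (j : ℕ) from by
          rw [Finset.mul_sum]; exact Finset.sum_congr rfl fun j _ => by ring]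
      rw [TT_yf (m - 1) (by omega) i]
      simp only [wv, Sum.elim_inl]
      rw [show m - 1 + 1 = m from by omega]
      split_ifs
      · field_simp
      · ring
    · simp only [hA, hZdef, hzz, Matrix.fromBlocks_apply₂₁, Matrix.fromBlocks_apply₂₂,
        Matrix.of_apply, Sum.elim_inl, Sum.elim_inr, Matrix.zero_apply, zero_mul,
        Finset.sum_const_zero, zero_add]
      rw [show ∑ j : Fin (n-1), TT (n-1) i j * (-xx / (1 + xx ^ n) * yf (n-1) (j : ℕ)) =
          -xx / (1 + xx ^ n) * ∑ j : Fin (n-1), TT (n-1) i j * yf (n-1) (j : ℕ) from by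
          rw [Finset.mul_sum]; exact Finset.sum_congr rfl fun j _ => by ring]
      rw [TT_yf (n - 1) (by omega) i]
      simp only [wv, Sum.elim_inr]
      rw [show n - 1 + 1 = n from by omega]
      split_ifs
      · field_simp
      · ring
  have hinv : (⅟ A) * (Matrix.of fun s (_ : Fin 1) => wv m n s) = Z := by
    rw [← hAZ, ← Matrix.mul_assoc, invOf_mul_self, Matrix.one_mul]
  rw [BigM, Matrix.det_fromBlocks₁₁, Matrix.mul_assoc, hinv, hdetA, Matrix.det_fin_one]
  simp only [Matrix.sub_apply, Matrix.of_apply, Matrix.mul_apply, hZdef]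
  rw [Fintype.sum_sum_type]
  have hb1 : ∑ j : Fin (m - 1), wv m n (Sum.inl j) * zz (Sum.inl j) =
      2 * xx ^ 2 * (1 + xx ^ (m - 2)) / (1 + xx ^ m) := by
    simp only [wv, Sum.elim_inl, hzz]
    rw [show ∑ j : Fin (m-1), (if (j:ℕ) = 0 ∨ (j:ℕ) + 1 = m - 1 then -xx else 0) *
          (-xx / (1 + xx ^ m) * yf (m-1) (j:ℕ)) =
        ∑ j : Fin (m-1), (if (j:ℕ) = 0 ∨ (j:ℕ) + 1 = m - 1 then
          -xx * (-xx / (1 + xx ^ m) * yf (m-1) (j:ℕ)) else 0) from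
      Finset.sum_congr rfl fun j _ => by split_ifs <;> ring]
    rw [sum_ite_two (m - 1) (by omega)]
    simp only [yf]
    rw [show m - 1 - 1 - 0 = m - 2 from by omega, show m - 1 - 1 - (m - 1 - 1) = 0 from by omega]
    rw [show m - 1 - 1 = m - 2 from by omega]
    field_simp
    ring
  have hb2 : ∑ j : Fin (n - 1), wv m n (Sum.inr j) * zz (Sum.inr j) =
      2 * xx ^ 2 * (1 + xx ^ (n - 2)) / (1 + xx ^ n) := by
    simp only [wv, Sum.elim_inr, hzz]
    rw [show ∑ j : Fin (n-1), (if (j:ℕ) = 0 ∨ (j:ℕ) + 1 = n - 1 then -xx else 0) *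
          (-xx / (1 + xx ^ n) * yf (n-1) (j:ℕ)) =
        ∑ j : Fin (n-1), (if (j:ℕ) = 0 ∨ (j:ℕ) + 1 = n - 1 then
          -xx * (-xx / (1 + xx ^ n) * yf (n-1) (j:ℕ)) else 0) from
      Finset.sum_congr rfl fun j _ => by split_ifs <;> ring]
    rw [sum_ite_two (n - 1) (by omega)]
    simp only [yf]
    rw [show n - 1 - 1 - 0 = n - 2 from by omega, show n - 1 - 1 - (n - 1 - 1) = 0 from by omega]
    rw [show n - 1 - 1 = n - 2 from by omega]
    field_simp
    ring
  rw [hb1, hb2]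
  ring

def dcR (m n i j : ℕ) : Prop :=
  (j = i + 1 ∧ j ≤ m - 1) ∨ (i = m - 1 ∧ j = 0) ∨ (j = i + 1 ∧ m ≤ i) ∨
    (i = 0 ∧ j = m) ∨ (i = m + n - 2 ∧ j = 0)

instance (m n i j : ℕ) : Decidable (dcR m n i j) := by unfold dcR; infer_instance

lemma adj_iff (m n : ℕ) (a b : Fin (m + n - 1)) :
    (doubleCycleGraph m n).Adj a b ↔
      (a : ℕ) ≠ (b : ℕ) ∧ (dcR m n a b ∨ dcR m n b a) := by
  rw [doubleCycleGraph, SimpleGraph.fromRel_adj]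
  constructor
  · rintro ⟨h1, h2⟩
    exact ⟨fun hv => h1 (Fin.ext hv), h2⟩
  · rintro ⟨h1, h2⟩
    exact ⟨fun hv => h1 (by rw [hv]), h2⟩

lemma deg_zero (m n : ℕ) (hm : 3 ≤ m) (hmn : m ≤ n) (v : Fin (m + n - 1))
    (hv : (v : ℕ) = 0) : (doubleCycleGraph m n).degree v = 4 := by
  rw [SimpleGraph.degree, SimpleGraph.neighborFinset_eq_filter]
  have hset : Finset.filter ((doubleCycleGraph m n).Adj v) Finset.univ =
      {(⟨1, by omega⟩ : Fin (m+n-1)), ⟨m - 1, by omega⟩, ⟨m, by omega⟩, ⟨m + n - 2, by omega⟩} := by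
    ext u
    have hu := u.isLt
    simp only [Finset.mem_filter, Finset.mem_univ, true_and, adj_iff, dcR,
      Finset.mem_insert, Finset.mem_singleton, Fin.ext_iff]
    omega
  rw [hset]
  rw [Finset.card_insert_of_notMem (by simp [Fin.ext_iff]; omega),
    Finset.card_insert_of_notMem (by simp [Fin.ext_iff]; omega),
    Finset.card_insert_of_notMem (by simp [Fin.ext_iff]; omega),
    Finset.card_singleton]

lemma deg_two (m n : ℕ) (hm : 3 ≤ m) (hmn : m ≤ n) (v : Fin (m + n - 1))
    (hv : (v : ℕ) ≠ 0) : (doubleCycleGraph m n).degree v = 2 := by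
  rw [SimpleGraph.degree, SimpleGraph.neighborFinset_eq_filter]
  rw [Finset.card_eq_two]
  have hvl := v.isLt
  by_cases c1 : (v : ℕ) = 1 ∨ (v : ℕ) = m
  · refine ⟨⟨0, by omega⟩, ⟨(v : ℕ) + 1, by omega⟩, by simp only [ne_eq, Fin.ext_iff]; omega, ?_⟩
    ext u
    have hu := u.isLt
    simp only [Finset.mem_filter, Finset.mem_univ, true_and, adj_iff, dcR,
      Finset.mem_insert, Finset.mem_singleton, Fin.ext_iff]
    omega
  · by_cases c2 : (v : ℕ) = m - 1 ∨ (v : ℕ) = m + n - 2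
    · refine ⟨⟨(v : ℕ) - 1, by omega⟩, ⟨0, by omega⟩, by simp only [ne_eq, Fin.ext_iff]; omega, ?_⟩
      ext u
      have hu := u.isLt
      simp only [Finset.mem_filter, Finset.mem_univ, true_and, adj_iff, dcR,
        Finset.mem_insert, Finset.mem_singleton, Fin.ext_iff]
      omega
    · refine ⟨⟨(v : ℕ) - 1, by omega⟩, ⟨(v : ℕ) + 1, by omega⟩, by simp only [ne_eq, Fin.ext_iff]; omega, ?_⟩
      ext u
      have hu := u.isLt
      simp only [Finset.mem_filter, Finset.mem_univ, true_and, adj_iff, dcR,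
        Finset.mem_insert, Finset.mem_singleton, Fin.ext_iff]
      omega

lemma card_edges (m n : ℕ) (hm : 3 ≤ m) (hmn : m ≤ n) :
    (doubleCycleGraph m n).edgeFinset.card = m + n := by
  have hsum := SimpleGraph.sum_degrees_eq_twice_card_edges (doubleCycleGraph m n)
  set v0 : Fin (m + n - 1) := ⟨0, by omega⟩ with hv0
  rw [← Finset.sum_erase_add _ _ (Finset.mem_univ v0)] at hsum
  rw [Finset.sum_congr rfl (fun v hv => deg_two m n hm hmn v (by
    have := Finset.ne_of_mem_erase hv
    rw [hv0] at this
    intro h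
    exact this (Fin.ext h))), Finset.sum_const, Finset.card_erase_of_mem (Finset.mem_univ _),
    Finset.card_univ, Fintype.card_fin, deg_zero m n hm hmn v0 rfl, smul_eq_mul] at hsum
  omega


/-- reindexing equivalence -/
def dcEquiv (m n : ℕ) (hm : 3 ≤ m) (hmn : m ≤ n) :
    ((Fin (m - 1) ⊕ Fin (n - 1)) ⊕ Fin 1) ≃ Fin (m + n - 1) where
  toFun s :=
    match s with
    | .inl (.inl i) => ⟨(i : ℕ) + 1, by have := i.isLt; omega⟩
    | .inl (.inr j) => ⟨m + (j : ℕ), by have := j.isLt; omega⟩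
    | .inr _ => ⟨0, by omega⟩
  invFun v :=
    if h0 : (v : ℕ) = 0 then .inr 0
    else if h1 : (v : ℕ) < m then .inl (.inl ⟨(v : ℕ) - 1, by omega⟩)
    else .inl (.inr ⟨(v : ℕ) - m, by have := v.isLt; omega⟩)
  left_inv s := by
    rcases s with (i | j) | k <;> dsimp only
    · have hi := i.isLt
      rw [dif_neg (by omega), dif_pos (by omega)]
      simp only [Sum.inl.injEq]
      exact Fin.ext (show (i : ℕ) + 1 - 1 = (i : ℕ) by omega)
    · have hj := j.isLt
      rw [dif_neg (by omega), dif_neg (by omega)]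
      simp only [Sum.inl.injEq, Sum.inr.injEq]
      exact Fin.ext (show m + (j : ℕ) - m = (j : ℕ) by omega)
    · rw [dif_pos rfl]
      exact congrArg Sum.inr (Subsingleton.elim _ _)
  right_inv v := by
    dsimp only
    have hv := v.isLt
    by_cases h0 : (v : ℕ) = 0
    · rw [dif_pos h0]
      exact Fin.ext (show (0 : ℕ) = (v : ℕ) by omega)
    · rw [dif_neg h0]
      by_cases h1 : (v : ℕ) < m
      · rw [dif_pos h1]
        exact Fin.ext (show (v : ℕ) - 1 + 1 = (v : ℕ) by omega)
      · rw [dif_neg h1]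
        exact Fin.ext (show m + ((v : ℕ) - m) = (v : ℕ) by omega)


lemma final_id (m n : ℕ) (hm : 3 ≤ m) (hmn : m ≤ n) :
    (1 - xx ^ 2) * (pp (m - 1) * pp (n - 1) *
      ((1 + 3 * xx ^ 2) - 2 * xx ^ 2 * (1 + xx ^ (m - 2)) / (1 + xx ^ m)
        - 2 * xx ^ 2 * (1 + xx ^ (n - 2)) / (1 + xx ^ n))) =
      -3 * xx ^ (2 * (m + n)) + 2 * xx ^ (m + 2 * n) + 2 * xx ^ (2 * m + n) +
        xx ^ (2 * n) + xx ^ (2 * m) - 2 * xx ^ n - 2 * xx ^ m + 1 := by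
  have hs : (xx ^ 2 - 1 : K) ≠ 0 := by
    intro h
    apply one_sub_xx_pow_ne 2 (by omega)
    linear_combination -h
  have hxm := one_add_xx_pow_ne m (by omega)
  have hxn := one_add_xx_pow_ne n (by omega)
  have hpm : pp (m - 1) = (xx ^ (2 * m) - 1) / (xx ^ 2 - 1) := by
    rw [eq_div_iff hs]
    have := pp_mul_eq (m - 1)
    rwa [show m - 1 + 1 = m from by omega] at this
  have hpn : pp (n - 1) = (xx ^ (2 * n) - 1) / (xx ^ 2 - 1) := by
    rw [eq_div_iff hs]
    have := pp_mul_eq (n - 1)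
    rwa [show n - 1 + 1 = n from by omega] at this
  rw [hpm, hpn]
  obtain ⟨a, rfl⟩ : ∃ a, m = a + 2 := ⟨m - 2, by omega⟩
  obtain ⟨b, rfl⟩ : ∃ b, n = b + 2 := ⟨n - 2, by omega⟩
  rw [show a + 2 - 2 = a from by omega, show b + 2 - 2 = b from by omega]
  field_simp
  ring


/-- For `3 ≤ m ≤ n`, the Ihara zeta function of the double cycle graph `G_{m,n}`. -/
theorem iharaZetaInv_doubleCycleGraph (m n : ℕ) (hm : 3 ≤ m) (hmn : m ≤ n) :
    iharaZetaInv (doubleCycleGraph m n) =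
      -3 * X ^ (2 * (m + n)) + 2 * X ^ (m + 2 * n) + 2 * X ^ (2 * m + n) +
        X ^ (2 * n) + X ^ (2 * m) - 2 * X ^ n - 2 * X ^ m + 1 := by
  apply phi_inj
  set φ := algebraMap (Polynomial ℤ) K with hφ
  set Mz := ((1 : Matrix (Fin (m+n-1)) (Fin (m+n-1)) (Polynomial ℤ))
      - (X : Polynomial ℤ) • (doubleCycleGraph m n).adjMatrix (Polynomial ℤ)
      + (X ^ 2 : Polynomial ℤ) • Matrix.diagonal
          (fun v => ((doubleCycleGraph m n).degree v : Polynomial ℤ) - 1))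
    with hMz
  have hentry : ∀ a b : Fin (m + n - 1), φ (Mz a b) =
      (if a = b then (if (a : ℕ) = 0 then 1 + 3 * xx ^ 2 else 1 + xx ^ 2)
        else if (a : ℕ) ≠ (b : ℕ) ∧ (dcR m n a b ∨ dcR m n b a) then -xx else 0) := by
    intro a b
    by_cases hab : a = b
    · subst hab
      rw [if_pos rfl, hMz]
      simp only [Matrix.add_apply, Matrix.sub_apply, Matrix.one_apply_eq, Matrix.smul_apply,
        SimpleGraph.adjMatrix_apply, Matrix.diagonal_apply_eq, smul_eq_mul]
      rw [if_neg ((doubleCycleGraph m n).irrefl)]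
      by_cases h0 : (a : ℕ) = 0
      · rw [if_pos h0, deg_zero m n hm hmn a h0]
        push_cast
        simp only [_root_.map_add, _root_.map_sub, _root_.map_mul, _root_.map_pow,
          _root_.map_one, map_ofNat, mul_zero, sub_zero]
        rw [show φ X = xx from rfl]
        ring
      · rw [if_neg h0, deg_two m n hm hmn a h0]
        push_cast
        simp only [_root_.map_add, _root_.map_sub, _root_.map_mul, _root_.map_pow,
          _root_.map_one, map_ofNat, mul_zero, sub_zero]
        rw [show φ X = xx from rfl]
        ring
    · rw [if_neg hab, hMz]
      simp only [Matrix.add_apply, Matrix.sub_apply, Matrix.smul_apply,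
        SimpleGraph.adjMatrix_apply, smul_eq_mul]
      rw [Matrix.one_apply_ne hab, Matrix.diagonal_apply_ne _ hab]
      by_cases hadj : (doubleCycleGraph m n).Adj a b
      · rw [if_pos hadj, if_pos ((adj_iff m n a b).1 hadj)]
        simp only [mul_one, mul_zero, add_zero, zero_sub, _root_.map_neg]
        rw [show φ X = xx from rfl]
      · rw [if_neg hadj, if_neg (fun hc => hadj ((adj_iff m n a b).2 hc))]
        simp only [mul_zero, sub_zero, add_zero, zero_sub, map_zero, neg_zero]
  have hmap : (Mz.map φ).submatrix (dcEquiv m n hm hmn) (dcEquiv m n hm hmn) = BigM m n := by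
    ext s t
    rw [Matrix.submatrix_apply, Matrix.map_apply, hentry]
    rcases s with (i | i) | i <;> rcases t with (j | j) | j <;>
      (have h1 := i.isLt; have h2 := j.isLt;
       dsimp only [BigM, dcEquiv, Equiv.coe_fn_mk];
       simp only [Matrix.fromBlocks_apply₁₁, Matrix.fromBlocks_apply₁₂,
         Matrix.fromBlocks_apply₂₁, Matrix.fromBlocks_apply₂₂,
         Matrix.of_apply, Sum.elim_inl, Sum.elim_inr, TT, wv, Matrix.zero_apply,
         Fin.mk.injEq, dcR, Sum.inl.injEq, Sum.inr.injEq, Fin.ext_iff, and_false,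
         false_and, or_false, false_or, and_true, true_and];
       split_ifs <;> first | rfl | contradiction | omega |
         (expose_names; simp only [false_and, and_false, false_or, or_false, true_and, and_true,
            not_false_iff] at *; omega) | (simp_all; done) | (simp_all <;> omega) |
         (rw [if_neg (by omega)]; split_ifs <;> first | rfl | omega) |
         (rw [if_neg (show ¬ ((i : ℕ) = (j : ℕ)) by omega),
           if_neg (show ¬ ((i : ℕ) + 1 = (j : ℕ) ∨ (j : ℕ) + 1 = (i : ℕ)) by omega)];
          exact if_neg (by assumption)))
  have hdet2 : φ Mz.det = (BigM m n).det := by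
    rw [RingHom.map_det, RingHom.mapMatrix_apply, ← Matrix.det_submatrix_equiv_self (dcEquiv m n hm hmn) (Mz.map φ), hmap]
  rw [iharaZetaInv, ← hMz, card_edges m n hm hmn, Fintype.card_fin,
    show m + n - (m + n - 1) = 1 from by omega, pow_one, _root_.map_mul, hdet2,
    BigM_det m n hm (le_trans hm hmn)]
  rw [show φ (1 - X ^ 2) = 1 - xx ^ 2 from by
    rw [_root_.map_sub, _root_.map_one, _root_.map_pow]; rfl]
  rw [show φ (-3 * X ^ (2 * (m + n)) + 2 * X ^ (m + 2 * n) + 2 * X ^ (2 * m + n) +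
      X ^ (2 * n) + X ^ (2 * m) - 2 * X ^ n - 2 * X ^ m + 1) =
      -3 * xx ^ (2 * (m + n)) + 2 * xx ^ (m + 2 * n) + 2 * xx ^ (2 * m + n) +
        xx ^ (2 * n) + xx ^ (2 * m) - 2 * xx ^ n - 2 * xx ^ m + 1 from by
    simp only [_root_.map_add, _root_.map_sub, _root_.map_mul, _root_.map_neg,
      _root_.map_pow, _root_.map_one, map_ofNat]
    rw [show φ X = xx from rfl]]
  exact final_id m n hm hmn

end DC
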